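/- In Π'_n = a₁a₂⋯a_{n!+n−1}, for every k ≥ n one has a_k < a₁ < a₂ < ⋯ < a_{n−1}. -/

import Mathlib

/-- `c_b`: shift values `≥ b` up by one. -/
def cshift (b x : ℕ) : ℕ := if x < b then x else x + 1

/-- the `i`-th smallest entry of `w` (1-based). -/
def nthSmallest (w : List ℕ) (i : ℕ) : ℕ := (List.insertionSort (· ≤ ·) w).getD (i - 1) 0

/-- the new last letter of the `i`-th extension of `w`. -/
def extb (w : List ℕ) (i : ℕ) : ℕ :=
  if i ≤ w.length then nthSmallest w i else w.foldr max 0 + 1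

/-- the `i`-th extension of `w`, `1 ≤ i ≤ w.length + 1`. -/
def ext (i : ℕ) (w : List ℕ) : List ℕ :=
  w.map (cshift (extb w i)) ++ [extb w i]

/-- reduced form: replace the `i`-th smallest entry by `i`. -/
def red (w : List ℕ) : List ℕ := w.map (fun x => (w.filter (· ≤ x)).length)

/-- `w` covers the `n`-permutation `p` (given in reduced form):
some length-`n` factor of `w` is order-isomorphic to `p`. -/
def covers (w : List ℕ) (n : ℕ) (p : List ℕ) : Prop :=
  ∃ k, k + n ≤ w.length ∧ red ((w.drop k).take n) = p

/-- Boolean version of `covers`. -/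
def coversB (w : List ℕ) (n : ℕ) (p : List ℕ) : Bool :=
  (List.range w.length).any fun k =>
    decide (k + n ≤ w.length) && decide (red ((w.drop k).take n) = p)

/-- one step of the greedy algorithm: append the smallest extension of the last
`n-1` letters whose order-isomorphism type is not yet a length-`n` factor;
return `none` if no extension is possible (termination). -/
def greedyStep (n : ℕ) (w : List ℕ) : Option (List ℕ) :=
  let s := w.drop (w.length - (n - 1))
  match (List.range' 1 (s.length + 1)).find? (fun i => ! coversB w n (red (ext i s))) with
  | some i => some (w.map (cshift (extb s i)) ++ [extb s i])
  | none => none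

/-- `greedy n k` is `Π'_{n,k}`, the word after `k` steps of the greedy algorithm
started from `12⋯(n-1)` (constant once the algorithm has terminated). -/
def greedy (n : ℕ) : ℕ → List ℕ
  | 0 => List.range' 1 (n - 1)
  | k + 1 =>
    match greedyStep n (greedy n k) with
    | some w => w
    | none => greedy n k

/-- the greedy algorithm performs exactly `k` steps and then terminates. -/
def terminatesAt (n k : ℕ) : Prop :=
  (∀ j < k, greedyStep n (greedy n j) ≠ none) ∧ greedyStep n (greedy n k) = none

/-- the `i`-th letter `a_i` of a word (1-based). -/
def letter (w : List ℕ) (i : ℕ) : ℕ := w.getD (i - 1) 0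

/-- `σ_k`, the reduced form of the length-`n` factor starting at position `k` (1-based). -/
def sigma (w : List ℕ) (n k : ℕ) : List ℕ := red ((w.drop (k - 1)).take n)

/-! ### Auxiliary lemmas -/

section Aux

lemma cshift_mono {b x y : ℕ} (h : x < y) : cshift b x < cshift b y := by
  unfold cshift; split <;> split <;> omega

lemma cshift_self_lt {b x : ℕ} (h : b ≤ x) : b < cshift b x := by
  unfold cshift; split <;> omega

lemma le_cshift (b x : ℕ) : x ≤ cshift b x := by
  unfold cshift; split <;> omega

lemma filter_le_mono {u : List ℕ} {a c : ℕ} (h : a ≤ c) :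
    (u.filter (· ≤ a)).length ≤ (u.filter (· ≤ c)).length := by
  induction u with
  | nil => simp
  | cons x t ih =>
    simp only [List.filter_cons, decide_eq_true_eq]
    split_ifs with h1 h2 <;> (try simp only [List.length_cons]) <;> omega

lemma filter_le_strict {u : List ℕ} {a c : ℕ} (h : a < c) (hc : c ∈ u) :
    (u.filter (· ≤ a)).length < (u.filter (· ≤ c)).length := by
  induction u with
  | nil => simp at hc
  | cons x t ih =>
    have hmono := filter_le_mono (u := t) (le_of_lt h)
    rcases List.mem_cons.1 hc with rfl | hc'
    · simp only [List.filter_cons, decide_eq_true_eq]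
      split_ifs with h1 h2 <;> (try simp only [List.length_cons]) <;> omega
    · have hrec := ih hc'
      simp only [List.filter_cons, decide_eq_true_eq]
      split_ifs with h1 h2 <;> (try simp only [List.length_cons]) <;> omega

lemma red_length (u : List ℕ) : (red u).length = u.length := by simp [red]

lemma red_getD {u : List ℕ} {p : ℕ} (hp : p < u.length) :
    (red u).getD p 0 = (u.filter (· ≤ u.getD p 0)).length := by
  rw [List.getD_eq_getElem _ _ (show p < (red u).length by rw [red_length]; exact hp),
      List.getD_eq_getElem _ _ hp]
  simp [red]

lemma red_lt {u : List ℕ} {p q : ℕ} (hp : p < u.length) (hq : q < u.length)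
    (h : u.getD p 0 < u.getD q 0) : (red u).getD p 0 < (red u).getD q 0 := by
  rw [red_getD hp, red_getD hq]
  refine filter_le_strict h ?_
  rw [List.getD_eq_getElem _ _ hq]
  exact List.getElem_mem _

lemma nthSmallest_mem {s : List ℕ} {i : ℕ} (h2 : i ≤ s.length) (h3 : 1 ≤ s.length) :
    nthSmallest s i ∈ s := by
  unfold nthSmallest
  have hlen : (List.insertionSort (· ≤ ·) s).length = s.length :=
    List.length_insertionSort _ _
  have hi : i - 1 < (List.insertionSort (· ≤ ·) s).length := by omega
  rw [List.getD_eq_getElem _ _ hi]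
  exact (List.perm_insertionSort (· ≤ ·) s).subset (List.getElem_mem _)

lemma sorted_zero_le {l : List ℕ} (hs : List.Pairwise (· ≤ ·) l) {j : ℕ} (hj : j < l.length) :
    l[0]'(by omega) ≤ l[j] := by
  rcases Nat.eq_zero_or_pos j with rfl | h
  · exact le_refl _
  · have := List.pairwise_iff_get.1 hs ⟨0, by omega⟩ ⟨j, hj⟩ (by simpa using h)
    simpa [List.get_eq_getElem] using this

lemma nthSmallest_one_le {s : List ℕ} {x : ℕ} (hx : x ∈ s) : nthSmallest s 1 ≤ x := by
  unfold nthSmallest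
  have hx' : x ∈ List.insertionSort (· ≤ ·) s :=
    ((List.perm_insertionSort (· ≤ ·) s).mem_iff).2 hx
  obtain ⟨j, hj⟩ := List.mem_iff_get.1 hx'
  have hs : List.Pairwise (· ≤ ·) (List.insertionSort (· ≤ ·) s) :=
    List.pairwise_insertionSort _ _
  have h0 : (0:ℕ) < (List.insertionSort (· ≤ ·) s).length := lt_of_le_of_lt (Nat.zero_le _) j.isLt
  rw [show (1:ℕ) - 1 = 0 from rfl, List.getD_eq_getElem _ _ h0]
  calc (List.insertionSort (· ≤ ·) s)[0] ≤ (List.insertionSort (· ≤ ·) s)[j.1] :=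
        sorted_zero_le hs j.isLt
    _ = x := by rw [← hj, List.get_eq_getElem]

lemma foldr_max_le {s : List ℕ} {m : ℕ} (h : ∀ x ∈ s, x ≤ m) : s.foldr max 0 ≤ m := by
  induction s with
  | nil => simp
  | cons a t ih =>
    simp only [List.foldr_cons, max_le_iff]
    exact ⟨h a (by simp), ih fun x hx => h x (by simp [hx])⟩

lemma getD_map_append {b : ℕ} {s : List ℕ} {p : ℕ} (hp : p < s.length) :
    (s.map (cshift b) ++ [b]).getD p 0 = cshift b (s.getD p 0) := by
  rw [List.getD_eq_getElem _ _ (show p < (s.map (cshift b) ++ [b]).length by simp; omega),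
      List.getD_eq_getElem _ _ hp,
      List.getElem_append_left (by simpa using hp)]
  simp

lemma getD_drop' {w : List ℕ} {d p : ℕ} (h : d + p < w.length) :
    (w.drop d).getD p 0 = w.getD (d + p) 0 := by
  rw [List.getD_eq_getElem _ _ (show p < (w.drop d).length by simp [List.length_drop]; omega),
      List.getD_eq_getElem _ _ h, List.getElem_drop]

lemma getD_take' {w : List ℕ} {m p : ℕ} (h1 : p < m) (h2 : p < w.length) :
    (w.take m).getD p 0 = w.getD p 0 := by
  rw [List.getD_eq_getElem _ _ (show p < (w.take m).length by simp [List.length_take]; omega),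
      List.getD_eq_getElem _ _ h2, List.getElem_take]

/-- The inductive invariant: the word has length at least `n-1`, all letters positive,
the first `n-1` letters strictly increasing, and every letter at (0-based) position
`≥ n-1` smaller than the first letter. -/
def GInv (n : ℕ) (w : List ℕ) : Prop :=
  n - 1 ≤ w.length ∧
  (∀ x ∈ w, 1 ≤ x) ∧
  (∀ j, j + 1 < n - 1 → j + 1 < w.length → w.getD j 0 < w.getD (j+1) 0) ∧
  (∀ p, n - 1 ≤ p → p < w.length → w.getD p 0 < w.getD 0 0)

lemma GInv.chain {n : ℕ} {w : List ℕ} (h : GInv n w) :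
    ∀ j, j < n - 1 → j < w.length → w.getD 0 0 ≤ w.getD j 0 := by
  obtain ⟨hlen, hpos, hincr, htail⟩ := h
  intro j
  induction j with
  | zero => intro _ _; exact le_refl _
  | succ j ih =>
    intro h1 h2
    exact le_trans (ih (by omega) (by omega)) (le_of_lt (hincr j h1 h2))

lemma covers_of_coversB {w : List ℕ} {n : ℕ} {p : List ℕ} (h : coversB w n p = true) :
    covers w n p := by
  simp only [coversB, List.any_eq_true, List.mem_range, Bool.and_eq_true,
    decide_eq_true_eq] at h
  obtain ⟨k, _, h1, h2⟩ := h
  exact ⟨k, h1, h2⟩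

lemma coversB_eq_false {w : List ℕ} {n : ℕ} {p : List ℕ} (h : ¬ covers w n p) :
    coversB w n p = false := by
  cases hb : coversB w n p
  · rfl
  · exact absurd (covers_of_coversB hb) h

lemma greedyStep_def (n : ℕ) (w : List ℕ) : greedyStep n w =
    match (List.range' 1 ((w.drop (w.length - (n - 1))).length + 1)).find?
        (fun i => ! coversB w n (red (ext i (w.drop (w.length - (n - 1)))))) with
    | some i => some (w.map (cshift (extb (w.drop (w.length - (n - 1))) i)) ++
        [extb (w.drop (w.length - (n - 1))) i])
    | none => none := rfl

lemma step_some {n : ℕ} {w w' : List ℕ} (h : greedyStep n w = some w') :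
    ∃ i, (List.range' 1 ((w.drop (w.length - (n - 1))).length + 1)).find?
        (fun i => ! coversB w n (red (ext i (w.drop (w.length - (n - 1)))))) = some i ∧
      w' = w.map (cshift (extb (w.drop (w.length - (n - 1))) i)) ++
        [extb (w.drop (w.length - (n - 1))) i] := by
  rw [greedyStep_def] at h
  cases hf : (List.range' 1 ((w.drop (w.length - (n - 1))).length + 1)).find?
      (fun i => ! coversB w n (red (ext i (w.drop (w.length - (n - 1)))))) with
  | none => rw [hf] at h; simp at h
  | some i =>
    rw [hf] at h
    exact ⟨i, rfl, by simpa using h.symm⟩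

/-- The crucial combinatorial fact: while the word is still short (`n ≤ |w| ≤ 2n-3`),
the first extension of the suffix is never covered, because its pattern has a descent
where every factor of `w` has an ascent. -/
lemma ext_one_not_covered {n : ℕ} (hn : 2 ≤ n) {w : List ℕ} (hInv : GInv n w)
    (hl1 : n ≤ w.length) (hl2 : w.length + 3 ≤ 2 * n) :
    ¬ covers w n (red (ext 1 (w.drop (w.length - (n - 1))))) := by
  have hchain := GInv.chain hInv
  obtain ⟨hlen, hpos, hincr, htail⟩ := hInv
  set d := w.length - (n - 1) with hd
  have hd1 : 1 ≤ d := by omega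
  have hd2 : d + 2 ≤ n := by omega
  rintro ⟨k, hk, hred⟩
  set s := w.drop d with hs
  have hslen : s.length = n - 1 := by simp [hs, List.length_drop]; omega
  have hb : extb s 1 = extb s 1 := rfl
  have hext : ext 1 s = s.map (cshift (extb s 1)) ++ [extb s 1] := rfl
  have hulen : (ext 1 s).length = n := by rw [hext]; simp [hslen]; omega
  have hvlen : ((w.drop k).take n).length = n := by simp; omega
  have hkd : k + 1 ≤ d := by omega
  set p := n - 2 - d with hp
  have hp1 : p + 1 = n - 1 - d := by omega
  have hu_p : (ext 1 s).getD p 0 = cshift (extb s 1) (w.getD (n-2) 0) := by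
    have e : d + p = n - 2 := by omega
    rw [hext, getD_map_append (by omega), hs, getD_drop' (by omega), e]
  have hu_p1 : (ext 1 s).getD (p+1) 0 = cshift (extb s 1) (w.getD (n-1) 0) := by
    have e : d + (p+1) = n - 1 := by omega
    rw [hext, getD_map_append (by omega), hs, getD_drop' (by omega), e]
  have hw1 : w.getD (n-1) 0 < w.getD 0 0 := htail (n-1) (le_refl _) (by omega)
  have hw2 : w.getD 0 0 ≤ w.getD (n-2) 0 := hchain (n-2) (by omega) (by omega)
  have hu_lt : (ext 1 s).getD (p+1) 0 < (ext 1 s).getD p 0 := by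
    rw [hu_p, hu_p1]; exact cshift_mono (by omega)
  have hv_p : ((w.drop k).take n).getD p 0 = w.getD (k+p) 0 := by
    rw [getD_take' (by omega) (by simp [List.length_drop]; omega), getD_drop' (by omega)]
  have hv_p1 : ((w.drop k).take n).getD (p+1) 0 = w.getD (k+p+1) 0 := by
    rw [getD_take' (by omega) (by simp [List.length_drop]; omega), getD_drop' (by omega),
      ← Nat.add_assoc]
  have hv_lt : ((w.drop k).take n).getD p 0 < ((w.drop k).take n).getD (p+1) 0 := by
    rw [hv_p, hv_p1]
    exact hincr (k+p) (by omega) (by omega)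
  have h1 : (red ((w.drop k).take n)).getD p 0 < (red ((w.drop k).take n)).getD (p+1) 0 :=
    red_lt (by omega) (by omega) hv_lt
  have h2 : (red (ext 1 s)).getD (p+1) 0 < (red (ext 1 s)).getD p 0 :=
    red_lt (by omega) (by omega) hu_lt
  rw [hred] at h1
  omega

/-- Any letter appended by a greedy step is positive and at most the first letter. -/
lemma step_bound {n : ℕ} (hn : 2 ≤ n) {w w' : List ℕ} (hInv : GInv n w)
    (h : greedyStep n w = some w') :
    ∃ b, 1 ≤ b ∧ b ≤ w.getD 0 0 ∧ w' = w.map (cshift b) ++ [b] := by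
  obtain ⟨i, hfind, hw'⟩ := step_some h
  set s := w.drop (w.length - (n - 1)) with hs
  have hlen := hInv.1
  have hpos := hInv.2.1
  have htail := hInv.2.2.2
  have hslen : s.length = n - 1 := by simp [hs, List.length_drop]; omega
  have h0len : 0 < w.length := by omega
  have ha1 : 1 ≤ w.getD 0 0 := by
    rw [List.getD_eq_getElem _ _ h0len]; exact hpos _ (List.getElem_mem _)
  have hspos : ∀ x ∈ s, 1 ≤ x := fun x hx => hpos x (List.mem_of_mem_drop hx)
  have hi := List.mem_range'_1.1 (List.mem_of_find?_eq_some hfind)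
  refine ⟨extb s i, ?_, ?_, hw'⟩
  · unfold extb
    split
    · exact hspos _ (nthSmallest_mem (by assumption) (by omega))
    · omega
  · by_cases hcase : 2 * n ≤ w.length + 2
    · -- the suffix lies entirely in the "tail", so all its letters are `< a₁`
      have hall : ∀ x ∈ s, x < w.getD 0 0 := by
        intro x hx
        rw [hs] at hx
        obtain ⟨j, hj, rfl⟩ := List.mem_iff_getElem.1 hx
        have hj' : w.length - (n-1) + j < w.length := by
          simp [List.length_drop] at hj; omega
        rw [List.getElem_drop]
        have ht := htail (w.length - (n-1) + j) (by omega) hj'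
        rw [List.getD_eq_getElem _ _ hj'] at ht
        exact ht
      unfold extb
      split
      · have := hall _ (nthSmallest_mem (by assumption) (by omega)); omega
      · have : s.foldr max 0 ≤ w.getD 0 0 - 1 :=
          foldr_max_le (fun x hx => by have := hall x hx; omega)
        omega
    · -- early phase: the greedy step picks `i = 1`, the minimum of the suffix
      push_neg at hcase
      have hnc : ¬ covers w n (red (ext 1 s)) := by
        by_cases hear : w.length < n
        · rintro ⟨k, hk, -⟩; omega
        · exact ext_one_not_covered hn hInv (by omega) (by omega)
      have hi1 : i = 1 := by
        have hr : (List.range' 1 (s.length + 1)) = 1 :: List.range' 2 s.length := by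
          rw [List.range'_succ]
        rw [hr, List.find?_cons_of_pos (by simp [coversB_eq_false hnc])] at hfind
        exact (Option.some.inj hfind).symm
      subst hi1
      unfold extb
      rw [if_pos (by omega)]
      by_cases hear : w.length < n
      · have hz : w.length - (n-1) = 0 := by omega
        have hsw : s = w := by rw [hs, hz, List.drop_zero]
        apply nthSmallest_one_le
        rw [hsw, List.getD_eq_getElem _ _ h0len]
        exact List.getElem_mem _
      · have hq : (n-1) - (w.length - (n-1)) < s.length := by omega
        have hmem : w.getD (n-1) 0 ∈ s := by
          have e : (w.length - (n-1)) + ((n-1) - (w.length - (n-1))) = n - 1 := by omega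
          have h2 : s.getD ((n-1) - (w.length - (n-1))) 0 = w.getD (n-1) 0 := by
            rw [hs, getD_drop' (by omega), e]
          rw [← h2, List.getD_eq_getElem _ _ hq]
          exact List.getElem_mem _
        have ht := htail (n-1) (le_refl _) (by omega)
        have hm := nthSmallest_one_le hmem
        omega

lemma inv_step {n : ℕ} (hn : 2 ≤ n) {w w' : List ℕ} (hInv : GInv n w)
    (h : greedyStep n w = some w') : GInv n w' := by
  obtain ⟨b, hb1, hb2, rfl⟩ := step_bound hn hInv h
  obtain ⟨hlen, hpos, hincr, htail⟩ := hInv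
  have h0len : 0 < w.length := by omega
  have hlen' : (w.map (cshift b) ++ [b]).length = w.length + 1 := by simp
  refine ⟨by omega, ?_, ?_, ?_⟩
  · intro x hx
    rcases List.mem_append.1 hx with hx | hx
    · obtain ⟨y, hy, rfl⟩ := List.mem_map.1 hx
      exact le_trans (hpos y hy) (le_cshift b y)
    · simp at hx; omega
  · intro j hj hj'
    have hjw : j + 1 < w.length := by omega
    rw [getD_map_append (by omega), getD_map_append hjw]
    exact cshift_mono (hincr j hj hjw)
  · intro p hp hp'
    rw [getD_map_append h0len]
    cases' Nat.lt_or_ge p w.length with hpw hpw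
    · rw [getD_map_append hpw]
      exact cshift_mono (htail p hp hpw)
    · have hpe : p = w.length := by rw [hlen'] at hp'; omega
      have hbp : (w.map (cshift b) ++ [b]).getD p 0 = b := by
        rw [List.getD_eq_getElem _ _ (by omega)]
        exact List.getElem_concat_length (by simp [hpe]) _
      rw [hbp]
      exact cshift_self_lt hb2

lemma inv_init (n : ℕ) (hn : 2 ≤ n) : GInv n (List.range' 1 (n-1)) := by
  refine ⟨by simp, ?_, ?_, ?_⟩
  · intro x hx
    have := List.mem_range'_1.1 hx
    omega
  · intro j hj hj'
    have hlen : (List.range' 1 (n-1)).length = n - 1 := by simp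
    rw [List.getD_eq_getElem _ _ (by omega), List.getD_eq_getElem _ _ (by omega),
      List.getElem_range', List.getElem_range']
    omega
  · intro p hp hp'
    simp at hp'
    omega

lemma greedy_inv (n : ℕ) (hn : 2 ≤ n) : ∀ k, GInv n (greedy n k) := by
  intro k
  induction k with
  | zero => exact inv_init n hn
  | succ k ih =>
    have hg : greedy n (k+1) = match greedyStep n (greedy n k) with
      | some w => w
      | none => greedy n k := rfl
    rw [hg]
    cases hstep : greedyStep n (greedy n k) with
    | none => exact ih
    | some w' => exact inv_step hn ih hstep

end Aux

/-- In `Π'_n = a₁⋯a_{n!+n-1}`: `a₁ < a₂ < ⋯ < a_{n-1}` and `a_k < a₁` for all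
`n ≤ k ≤ n!+n-1`. -/
theorem stmt9 (n : ℕ) (hn : 2 ≤ n) (k : ℕ) (hterm : terminatesAt n k) :
    (∀ j, 1 ≤ j → j + 1 ≤ n - 1 →
      letter (greedy n k) j < letter (greedy n k) (j + 1)) ∧
    (∀ i, n ≤ i → i ≤ Nat.factorial n + n - 1 →
      letter (greedy n k) i < letter (greedy n k) 1) := by
  have hInv := greedy_inv n hn k
  obtain ⟨hlen, hpos, hincr, htail⟩ := hInv
  constructor
  · intro j hj1 hj2
    have h := hincr (j-1) (by omega) (by omega)
    rw [show j - 1 + 1 = j from by omega] at h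
    simpa [letter] using h
  · intro i hi hi'
    have h0 : 0 < (greedy n k).length := by omega
    have ha1 : 1 ≤ (greedy n k).getD 0 0 := by
      rw [List.getD_eq_getElem _ _ h0]
      exact hpos _ (List.getElem_mem _)
    unfold letter
    rw [show (1:ℕ) - 1 = 0 from rfl]
    cases' Nat.lt_or_ge (i-1) (greedy n k).length with hiw hiw
    · exact htail (i-1) (by omega) hiw
    · rw [List.getD_eq_default _ _ hiw]
      omega
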